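/- Let (Ω, 𝔉, ℙ) be a probability space equipped with a filtration (𝔉_t)_{t=0}^T, and let (X_t)_{t=1}^T be real-valued random variables such that X_t is 𝔉_t-measurable and e^{X_t} is integrable for each t. Then for every δ ∈ (0,1), with probability at least 1 − δ the following holds simultaneously for all 1 ≤ T' ≤ T: ∑_{t=1}^{T'} X_t ≤ ∑_{t=1}^{T'} log E[ e^{X_t} | 𝔉_{t−1} ] + log(1/δ). -/

import Mathlib

open MeasureTheory
open Filter

lemma aux_sup_min (c y : ℝ) (hy : 0 ≤ y) :
    ⨆ n : ℕ, ENNReal.ofReal (min c n * y) = ENNReal.ofReal (c * y) := by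
  apply le_antisymm
  · exact iSup_le fun n => ENNReal.ofReal_le_ofReal
      (mul_le_mul_of_nonneg_right (min_le_left _ _) hy)
  · refine le_iSup_of_le ⌈c⌉₊ ?_
    rw [min_eq_left (Nat.le_ceil c)]

lemma sm_min_const {Ω : Type*} {m : MeasurableSpace Ω} {f : Ω → ℝ}
    (hf : StronglyMeasurable f) (c : ℝ) :
    StronglyMeasurable (fun ω => min (f ω) c) :=
  hf.inf stronglyMeasurable_const

lemma integrable_mul_condexp_aux {Ω : Type*} {m m0 : MeasurableSpace Ω} (hm : m ≤ m0)
    {μ : Measure Ω} [IsProbabilityMeasure μ] {f Y : Ω → ℝ}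
    (hf : StronglyMeasurable[m] f) (hf0 : ∀ ω, 0 ≤ f ω)
    (hY : Integrable Y μ) (hY0 : ∀ ω, 0 ≤ Y ω)
    (hint : Integrable (fun ω => f ω * (μ[Y|m]) ω) μ) :
    Integrable (fun ω => f ω * Y ω) μ := by
  set fn : ℕ → Ω → ℝ := fun n ω => min (f ω) n with hfn
  have hfn_sm : ∀ n, StronglyMeasurable[m] (fn n) := fun n => sm_min_const hf n
  have hfn_bd : ∀ n ω, ‖fn n ω‖ ≤ (n : ℝ) := fun n ω => by
    rw [Real.norm_eq_abs, abs_of_nonneg (le_min (hf0 ω) n.cast_nonneg)]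
    exact min_le_right _ _
  have hfnY_int : ∀ n, Integrable (fun ω => fn n ω * Y ω) μ := fun n =>
    hY.bdd_mul (((hfn_sm n).mono hm).aestronglyMeasurable) (.of_forall (hfn_bd n))
  have hfnC_int : ∀ n, Integrable (fun ω => fn n ω * (μ[Y|m]) ω) μ := fun n =>
    integrable_condExp.bdd_mul (((hfn_sm n).mono hm).aestronglyMeasurable)
      (.of_forall (hfn_bd n))
  have hce : ∀ n, μ[fun ω => fn n ω * Y ω|m] =ᵐ[μ] fun ω => fn n ω * (μ[Y|m]) ω := fun n =>
    condExp_stronglyMeasurable_mul_of_bound hm (hfn_sm n) hY n (.of_forall (hfn_bd n))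
  have hC0 : 0 ≤ᵐ[μ] μ[Y|m] := condExp_nonneg (.of_forall hY0)
  have hint_le : ∀ n, ∫ ω, fn n ω * Y ω ∂μ ≤ ∫ ω, f ω * (μ[Y|m]) ω ∂μ := by
    intro n
    have h1 : ∫ ω, fn n ω * Y ω ∂μ = ∫ ω, fn n ω * (μ[Y|m]) ω ∂μ := by
      rw [← integral_condExp (f := fun ω => fn n ω * Y ω) hm]
      exact integral_congr_ae (hce n)
    rw [h1]
    refine integral_mono_ae (hfnC_int n) hint ?_
    filter_upwards [hC0] with ω hω
    exact mul_le_mul_of_nonneg_right (min_le_left _ _) hω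
  refine ⟨(hf.mono hm).aestronglyMeasurable.mul hY.1, ?_⟩
  rw [hasFiniteIntegral_iff_ofReal (.of_forall fun ω => mul_nonneg (hf0 ω) (hY0 ω))]
  calc ∫⁻ ω, ENNReal.ofReal (f ω * Y ω) ∂μ
      = ∫⁻ ω, ⨆ n : ℕ, ENNReal.ofReal (fn n ω * Y ω) ∂μ := by
        congr 1; funext ω; rw [aux_sup_min _ _ (hY0 ω)]
    _ = ⨆ n : ℕ, ∫⁻ ω, ENNReal.ofReal (fn n ω * Y ω) ∂μ := by
        refine lintegral_iSup' (fun n => ?_) (.of_forall fun ω n m hnm => ?_)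
        · exact ENNReal.measurable_ofReal.comp_aemeasurable
            ((((hfn_sm n).mono hm).measurable.aemeasurable).mul hY.1.aemeasurable)
        · exact ENNReal.ofReal_le_ofReal (mul_le_mul_of_nonneg_right
            (min_le_min le_rfl (Nat.cast_le.2 hnm)) (hY0 ω))
    _ ≤ ENNReal.ofReal (∫ ω, f ω * (μ[Y|m]) ω ∂μ) := by
        refine iSup_le fun n => ?_
        rw [← ofReal_integral_eq_lintegral_ofReal (hfnY_int n)
          (.of_forall fun ω => mul_nonneg (le_min (hf0 ω) n.cast_nonneg) (hY0 ω))]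
        exact ENNReal.ofReal_le_ofReal (hint_le n)
    _ < ⊤ := ENNReal.ofReal_lt_top

/-- time-uniform martingale Chernoff bound: with probability at
least `1 − δ`, simultaneously for all `1 ≤ T' ≤ T`,
`∑_{t=1}^{T'} X_t ≤ ∑_{t=1}^{T'} log E[e^{X_t} | 𝔉_{t−1}] + log(1/δ)`. -/
theorem time_uniform_martingale_chernoff {Ω : Type*} {m0 : MeasurableSpace Ω}
    (ℙ : Measure Ω) [IsProbabilityMeasure ℙ] (T : ℕ) (ℱ : Filtration ℕ m0)
    (X : ℕ → Ω → ℝ)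
    (hX_meas : ∀ t, 1 ≤ t → t ≤ T → Measurable[ℱ t] (X t))
    (hX_int : ∀ t, 1 ≤ t → t ≤ T → Integrable (fun ω => Real.exp (X t ω)) ℙ)
    (δ : ℝ) (hδ : δ ∈ Set.Ioo (0 : ℝ) 1) :
    ENNReal.ofReal (1 - δ) ≤
      ℙ {ω | ∀ T', 1 ≤ T' → T' ≤ T →
        (∑ t ∈ Finset.Icc 1 T', X t ω) ≤
          (∑ t ∈ Finset.Icc 1 T',
              Real.log ((ℙ[(fun ω' => Real.exp (X t ω')) | ℱ (t - 1)]) ω)) +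
            Real.log (1 / δ)} := by
  obtain ⟨hδ0, hδ1⟩ := hδ
  have hε1 : 1 < 1 / δ := by rw [lt_div_iff₀ hδ0]; linarith
  have hε0 : (0 : ℝ) < 1 / δ := by positivity
  set g : ℕ → Ω → ℝ := fun t => ℙ[(fun ω' => Real.exp (X t ω')) | ℱ (t - 1)] with hg
  set W : ℕ → Ω → ℝ := fun t ω => Real.exp (X t ω - Real.log (g t ω)) with hWdef
  set M : ℕ → Ω → ℝ := fun k ω => ∏ t ∈ Finset.Icc 1 k, W t ω with hMdef
  have hW_pos : ∀ t ω, 0 < W t ω := fun t ω => Real.exp_pos _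
  have hM_pos : ∀ k ω, 0 < M k ω := fun k ω => Finset.prod_pos fun t _ => hW_pos t ω
  have hM_zero : ∀ ω, M 0 ω = 1 := by intro ω; simp [hMdef]
  -- measurability
  have hg_sm : ∀ t, StronglyMeasurable[ℱ (t - 1)] (g t) := fun t => stronglyMeasurable_condExp
  have hW_meas : ∀ t, 1 ≤ t → t ≤ T → Measurable[ℱ t] (W t) := by
    intro t h1 h2
    have hgm : Measurable[ℱ t] (g t) :=
      ((hg_sm t).measurable).mono (ℱ.mono (Nat.sub_le t 1)) le_rfl
    exact Real.measurable_exp.comp ((hX_meas t h1 h2).sub (Real.measurable_log.comp hgm))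
  have hM_meas : ∀ k, k ≤ T → Measurable[ℱ k] (M k) := by
    intro k hk
    apply Finset.measurable_prod
    intro t ht
    rw [Finset.mem_Icc] at ht
    exact (hW_meas t ht.1 (ht.2.trans hk)).mono (ℱ.mono ht.2) le_rfl
  -- positivity of g a.e.
  have hg_pos : ∀ t, 1 ≤ t → t ≤ T → ∀ᵐ ω ∂ℙ, 0 < g t ω := by
    intro t h1 h2
    have hs_meas : MeasurableSet[ℱ (t - 1)] {ω | g t ω ≤ 0} :=
      (hg_sm t).measurable measurableSet_Iic
    have hs_m0 : MeasurableSet {ω | g t ω ≤ 0} := ℱ.le (t - 1) _ hs_meas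
    have h0 : ∫ ω in {ω | g t ω ≤ 0}, Real.exp (X t ω) ∂ℙ
        = ∫ ω in {ω | g t ω ≤ 0}, g t ω ∂ℙ :=
      (setIntegral_condExp (ℱ.le (t - 1)) (hX_int t h1 h2) hs_meas).symm
    have hle : ∫ ω in {ω | g t ω ≤ 0}, g t ω ∂ℙ ≤ 0 :=
      setIntegral_nonpos hs_m0 (fun ω hω => hω)
    have hge : 0 ≤ ∫ ω in {ω | g t ω ≤ 0}, Real.exp (X t ω) ∂ℙ :=
      integral_nonneg fun ω => (Real.exp_pos _).le
    have heq0 : ∫ ω in {ω | g t ω ≤ 0}, Real.exp (X t ω) ∂ℙ = 0 :=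
      le_antisymm (h0 ▸ hle) hge
    have hae := (integral_eq_zero_iff_of_nonneg (fun ω => (Real.exp_pos (X t ω)).le)
      ((hX_int t h1 h2).integrableOn)).mp heq0
    have hnull : ℙ {ω | g t ω ≤ 0} = 0 := by
      have h := hae
      rw [Filter.EventuallyEq, ae_iff] at h
      simp only [Pi.zero_apply, Real.exp_ne_zero, not_false_iff] at h
      rwa [Set.setOf_true, Measure.restrict_apply_univ] at h
    rw [ae_iff]
    convert hnull using 2
    ext ω
    simp [not_lt]
  -- one-step supermartingale property
  have hstep : ∀ k, k < T → Integrable (M k) ℙ →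
      Integrable (M (k+1)) ℙ ∧ ℙ[M (k+1)|ℱ k] =ᵐ[ℙ] M k := by
    intro k hk hint_k
    have h1' : 1 ≤ k + 1 := Nat.succ_le_succ (Nat.zero_le k)
    have h2' : k + 1 ≤ T := hk
    have hYint := hX_int (k+1) h1' h2'
    set Y : Ω → ℝ := fun ω => Real.exp (X (k+1) ω) with hY
    have hgk : g (k+1) = ℙ[Y|ℱ k] := rfl
    set f : Ω → ℝ := fun ω => M k ω * Real.exp (-Real.log (g (k+1) ω)) with hf
    have hgkm : Measurable[ℱ k] (g (k+1)) := by
      have h := (hg_sm (k+1)).measurable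
      simpa using h
    have hf_sm : StronglyMeasurable[ℱ k] f :=
      ((hM_meas k hk.le).mul
        (Real.measurable_exp.comp (Real.measurable_log.comp hgkm).neg)).stronglyMeasurable
    have hf0 : ∀ ω, 0 ≤ f ω := fun ω =>
      mul_nonneg (hM_pos k ω).le (Real.exp_pos _).le
    have hfg_eq : (fun ω => f ω * (ℙ[Y|ℱ k]) ω) =ᵐ[ℙ] M k := by
      filter_upwards [hg_pos (k+1) h1' h2'] with ω hω
      rw [← hgk]
      show M k ω * Real.exp (-Real.log (g (k+1) ω)) * g (k+1) ω = M k ω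
      rw [Real.exp_neg, Real.exp_log hω, mul_assoc, inv_mul_cancel₀ hω.ne', mul_one]
    have hint' : Integrable (fun ω => f ω * (ℙ[Y|ℱ k]) ω) ℙ := hint_k.congr hfg_eq.symm
    have hintfY := integrable_mul_condexp_aux (ℱ.le k) hf_sm hf0 hYint
      (fun ω => (Real.exp_pos _).le) hint'
    have hfY_eq : (fun ω => f ω * Y ω) = M (k+1) := by
      funext ω
      show M k ω * Real.exp (-Real.log (g (k+1) ω)) * Real.exp (X (k+1) ω) = M (k+1) ω
      rw [hMdef]
      simp only []
      rw [Finset.prod_Icc_succ_top h1', hWdef]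
      simp only []
      rw [sub_eq_add_neg, Real.exp_add]
      ring
    have hcond1 : ℙ[M (k+1)|ℱ k] =ᵐ[ℙ] M k :=
      calc ℙ[M (k+1)|ℱ k] = ℙ[f * Y|ℱ k] := by rw [← hfY_eq]; rfl
        _ =ᵐ[ℙ] f * ℙ[Y|ℱ k] := condExp_mul_of_stronglyMeasurable_left hf_sm hintfY hYint
        _ =ᵐ[ℙ] M k := hfg_eq
    exact ⟨hfY_eq ▸ hintfY, hcond1⟩
  have hMint : ∀ k, k ≤ T → Integrable (M k) ℙ := by
    intro k
    induction k with
    | zero =>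
      intro _
      have h : M 0 = fun _ => (1:ℝ) := funext hM_zero
      rw [h]
      exact integrable_const 1
    | succ k ih =>
      intro hk
      exact (hstep k hk (ih (Nat.le_of_succ_le hk))).1
  have hcond : ∀ k, k < T → ℙ[M (k+1)|ℱ k] =ᵐ[ℙ] M k := fun k hk =>
    (hstep k hk (hMint k hk.le)).2
  -- transfer of integrals
  have htrans : ∀ (k : ℕ) (B : Set Ω), MeasurableSet[ℱ k] B → ∀ j, k ≤ j → j ≤ T →
      ∫ ω in B, M j ω ∂ℙ = ∫ ω in B, M k ω ∂ℙ := by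
    intro k B hB j hkj
    induction j, hkj using Nat.le_induction with
    | base => intro _; rfl
    | succ j hkj ih =>
      intro hjT
      have hjT' : j < T := hjT
      rw [← ih hjT'.le]
      have hBj : MeasurableSet[ℱ j] B := ℱ.mono hkj _ hB
      rw [← setIntegral_condExp (ℱ.le j) (hMint (j+1) hjT) hBj]
      exact setIntegral_congr_ae (ℱ.le j _ hBj)
        (by filter_upwards [hcond j hjT'] with ω h _ using h)
  -- events
  set A : ℕ → Set Ω := fun k => {ω | 1/δ ≤ M k ω ∧ ∀ j < k, M j ω < 1/δ} with hA
  have hA_F : ∀ k, k ≤ T → MeasurableSet[ℱ k] (A k) := by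
    intro k hk
    have hrw : A k = {ω | 1/δ ≤ M k ω} ∩ ⋂ (j : ℕ) (_ : j < k), {ω | M j ω < 1/δ} := by
      ext ω; simp [hA, Set.mem_iInter]
    rw [hrw]
    refine MeasurableSet.inter ((hM_meas k hk) measurableSet_Ici) ?_
    refine MeasurableSet.iInter fun j => MeasurableSet.iInter fun hj => ?_
    exact ((hM_meas j (hj.le.trans hk)).mono (ℱ.mono hj.le) le_rfl) measurableSet_Iio
  have hA_m0 : ∀ k, k ≤ T → MeasurableSet (A k) := fun k hk => ℱ.le k _ (hA_F k hk)
  set E : Set Ω := ⋃ k ∈ Finset.Icc 1 T, A k with hE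
  have hE_m0 : MeasurableSet E :=
    MeasurableSet.biUnion (Finset.Icc 1 T).countable_toSet
      (fun k hk => hA_m0 k (Finset.mem_Icc.mp hk).2)
  have hd : ∀ i j, i < j → Disjoint (A i) (A j) := by
    intro i j hij
    rw [Set.disjoint_left]
    rintro ω ⟨hi1, _⟩ ⟨_, hj2⟩
    exact absurd hi1 (not_le.mpr (hj2 i hij))
  have h_one : ∫ ω, M T ω ∂ℙ = 1 := by
    have h := htrans 0 Set.univ MeasurableSet.univ T (Nat.zero_le T) le_rfl
    rw [setIntegral_univ, setIntegral_univ] at h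
    have h2 : ∫ ω, M 0 ω ∂ℙ = ∫ _ω, (1:ℝ) ∂ℙ :=
      integral_congr_ae (.of_forall fun ω => hM_zero ω)
    rw [h, h2, integral_const]
    simp
  have hsum_le : ∑ k ∈ Finset.Icc 1 T, (ℙ (A k)).toReal ≤ δ := by
    have h1 : ∀ k ∈ Finset.Icc 1 T, (1/δ) * (ℙ (A k)).toReal ≤ ∫ ω in A k, M T ω ∂ℙ := by
      intro k hk
      rw [Finset.mem_Icc] at hk
      have hc := setIntegral_ge_of_const_le_real (hA_m0 k hk.2) (measure_ne_top ℙ _)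
        (fun ω hω => hω.1) ((hMint k hk.2).integrableOn)
      calc (1/δ) * (ℙ (A k)).toReal ≤ ∫ ω in A k, M k ω ∂ℙ := hc
        _ = ∫ ω in A k, M T ω ∂ℙ := (htrans k (A k) (hA_F k hk.2) T hk.2 le_rfl).symm
    have h2 : ∑ k ∈ Finset.Icc 1 T, (1/δ) * (ℙ (A k)).toReal ≤ 1 := by
      calc ∑ k ∈ Finset.Icc 1 T, (1/δ) * (ℙ (A k)).toReal
          ≤ ∑ k ∈ Finset.Icc 1 T, ∫ ω in A k, M T ω ∂ℙ := Finset.sum_le_sum h1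
        _ = ∫ ω in E, M T ω ∂ℙ := by
            rw [hE]
            refine (integral_biUnion_finset _ (fun k hk => hA_m0 k (Finset.mem_Icc.mp hk).2)
              ?_ (fun k _ => (hMint T le_rfl).integrableOn)).symm
            intro i _ j _ hij
            rcases hij.lt_or_gt with h | h
            · exact hd i j h
            · exact (hd j i h).symm
        _ ≤ ∫ ω, M T ω ∂ℙ := setIntegral_le_integral (hMint T le_rfl)
            (.of_forall fun ω => (hM_pos T ω).le)
        _ = 1 := h_one
    rw [← Finset.mul_sum] at h2
    have h4 := mul_le_mul_of_nonneg_left h2 hδ0.le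
    rw [mul_one, ← mul_assoc, mul_one_div, div_self hδ0.ne', one_mul] at h4
    exact h4
  have hEle : ℙ E ≤ ENNReal.ofReal δ := by
    have hle1 : ℙ E ≤ ∑ k ∈ Finset.Icc 1 T, ℙ (A k) := by
      rw [hE]; exact measure_biUnion_finset_le _ _
    have htr : (ℙ E).toReal ≤ δ := by
      refine le_trans ?_ hsum_le
      have hne : ∑ k ∈ Finset.Icc 1 T, ℙ (A k) ≠ ⊤ :=
        (ENNReal.sum_lt_top.mpr fun k _ => measure_lt_top ℙ _).ne
      refine le_trans (ENNReal.toReal_mono hne hle1) ?_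
      rw [ENNReal.toReal_sum fun k _ => measure_ne_top ℙ _]
    rw [← ENNReal.ofReal_toReal (measure_ne_top ℙ E)]
    exact ENNReal.ofReal_le_ofReal htr
  have hEc : Eᶜ ⊆ {ω | ∀ T', 1 ≤ T' → T' ≤ T →
      (∑ t ∈ Finset.Icc 1 T', X t ω) ≤
        (∑ t ∈ Finset.Icc 1 T', Real.log (g t ω)) + Real.log (1 / δ)} := by
    intro ω hω
    have hnot : ∀ k, k ∈ Finset.Icc 1 T → ω ∉ A k := by
      intro k hk hmem
      exact hω (Set.mem_biUnion hk hmem)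
    have hlt : ∀ k, k ≤ T → M k ω < 1/δ := by
      intro k
      induction k using Nat.strong_induction_on with
      | _ k ih =>
        intro hk
        rcases Nat.eq_zero_or_pos k with h0 | h1
        · subst h0; rw [hM_zero ω]; exact hε1
        · by_contra hcon
          push_neg at hcon
          exact hnot k (Finset.mem_Icc.mpr ⟨h1, hk⟩)
            ⟨hcon, fun j hj => ih j hj (le_trans hj.le hk)⟩
    intro T' h1 h2
    have hMe : M T' ω = Real.exp (∑ t ∈ Finset.Icc 1 T', (X t ω - Real.log (g t ω))) := by
      rw [Real.exp_sum]
    have h3 : Real.exp (∑ t ∈ Finset.Icc 1 T', (X t ω - Real.log (g t ω))) < 1/δ :=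
      hMe ▸ hlt T' h2
    have h4 := (Real.lt_log_iff_exp_lt hε0).mpr h3
    rw [Finset.sum_sub_distrib] at h4
    linarith
  calc ENNReal.ofReal (1 - δ) = 1 - ENNReal.ofReal δ := by
        rw [ENNReal.ofReal_sub 1 hδ0.le, ENNReal.ofReal_one]
    _ ≤ 1 - ℙ E := tsub_le_tsub_left hEle 1
    _ = ℙ Eᶜ := (prob_compl_eq_one_sub hE_m0).symm
    _ ≤ _ := measure_mono hEc
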